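/- Let G be a graph with a perfect matching. An edge subset S ⊆ E(G) is a global forcing set of G if and only if S intersects the edge set of every nice cycle of G. -/

import Mathlib

open SimpleGraph

variable {V : Type*}

/-- `M` is a perfect matching of `G`, viewed as a set of edges. -/
def IsPM (G : SimpleGraph V) (M : Set (Sym2 V)) : Prop :=
  M ⊆ G.edgeSet ∧ ∀ v : V, ∃! e, e ∈ M ∧ v ∈ e

/-- `G` has a perfect matching. -/
def HasPM (G : SimpleGraph V) : Prop := ∃ M, IsPM G M

/-- `c` is an `M`-alternating cycle of `G`: a cycle in which every vertex of the
cycle lies on exactly one edge of the cycle belonging to `M`. -/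
def IsAltCycle (G : SimpleGraph V) (M : Set (Sym2 V)) {v : V} (c : G.Walk v v) : Prop :=
  c.IsCycle ∧ ∀ w ∈ c.support, ∃! e, e ∈ c.edges ∧ e ∈ M ∧ w ∈ e

/-- `S` is a forcing set of the perfect matching `M` of `G`. -/
def IsForcingSet (G : SimpleGraph V) (M S : Set (Sym2 V)) : Prop :=
  S ⊆ M ∧ ∀ M', IsPM G M' → S ⊆ M' → M' = M

/-- `S ⊆ E(G) \ M` is an anti-forcing set of `M`: `G - S` has a unique perfect matching. -/
def IsAntiForcingSet (G : SimpleGraph V) (M S : Set (Sym2 V)) : Prop :=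
  S ⊆ G.edgeSet \ M ∧ ∃! M', IsPM (G.deleteEdges S) M'

/-- `S` is a global forcing set of `G`. -/
def IsGFS (G : SimpleGraph V) (S : Set (Sym2 V)) : Prop :=
  S ⊆ G.edgeSet ∧ ∀ M M', IsPM G M → IsPM G M' → M ∩ S = M' ∩ S → M = M'

/-- `G` has a perfect matching avoiding the vertex set `A`, i.e. `G - A` has a p.m. -/
def PMAvoiding (G : SimpleGraph V) (A : Set V) : Prop :=
  ∃ M, M ⊆ G.edgeSet ∧ (∀ e ∈ M, ∀ v, v ∈ e → v ∉ A) ∧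
    ∀ v, v ∉ A → ∃! e, e ∈ M ∧ v ∈ e

/-- `c` is a nice cycle of `G`: `G - V(c)` has a perfect matching. -/
def IsNiceCycle (G : SimpleGraph V) {v : V} (c : G.Walk v v) : Prop :=
  c.IsCycle ∧ PMAvoiding G {w | w ∈ c.support}

/-- The global forcing number. -/
noncomputable def gf (G : SimpleGraph V) : ℕ :=
  sInf {k | ∃ S, IsGFS G S ∧ S.ncard = k}

/-- The anti-forcing number of a perfect matching `M`. -/
noncomputable def af (G : SimpleGraph V) (M : Set (Sym2 V)) : ℕ :=
  sInf {k | ∃ S, IsAntiForcingSet G M S ∧ S.ncard = k}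

/-- The maximum anti-forcing number. -/
noncomputable def Af (G : SimpleGraph V) : ℕ :=
  sSup {k | ∃ M, IsPM G M ∧ af G M = k}

/-- The forcing number of a perfect matching `M`. -/
noncomputable def fnum (G : SimpleGraph V) (M : Set (Sym2 V)) : ℕ :=
  sInf {k | ∃ S, IsForcingSet G M S ∧ S.ncard = k}

/-- The maximum forcing number. -/
noncomputable def Fnum (G : SimpleGraph V) : ℕ :=
  sSup {k | ∃ M, IsPM G M ∧ fnum G M = k}







open Classical in
/-- Partner function of a matching. -/
noncomputable def pf (M : Set (Sym2 V)) (v : V) : V :=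
  if h : ∃! e, e ∈ M ∧ v ∈ e then Sym2.Mem.other h.exists.choose_spec.2 else v

lemma pf_edge {M : Set (Sym2 V)} {v : V} (h : ∃! e, e ∈ M ∧ v ∈ e) :
    s(v, pf M v) ∈ M := by
  rw [pf, dif_pos h, Sym2.other_spec h.exists.choose_spec.2]
  exact h.exists.choose_spec.1

lemma pf_uniq {M : Set (Sym2 V)} {v : V} (h : ∃! e, e ∈ M ∧ v ∈ e)
    {e : Sym2 V} (heM : e ∈ M) (hve : v ∈ e) : e = s(v, pf M v) :=
  h.unique ⟨heM, hve⟩ ⟨pf_edge h, Sym2.mem_mk_left _ _⟩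

lemma pf_ne {G : SimpleGraph V} {M : Set (Sym2 V)} (hE : M ⊆ G.edgeSet) {v : V}
    (h : ∃! e, e ∈ M ∧ v ∈ e) : pf M v ≠ v := by
  have := hE (pf_edge h)
  rw [SimpleGraph.mem_edgeSet] at this
  exact this.ne'

lemma pf_eq_iff {G : SimpleGraph V} {M : Set (Sym2 V)} (hE : M ⊆ G.edgeSet) {v w : V}
    (h : ∃! e, e ∈ M ∧ v ∈ e) : pf M v = w ↔ s(v, w) ∈ M := by
  constructor
  · rintro rfl; exact pf_edge h
  · intro hm
    have h2 := pf_uniq h hm (Sym2.mem_mk_left _ _)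
    rw [Sym2.eq_iff] at h2
    rcases h2 with ⟨-, h2⟩ | ⟨h1, -⟩
    · exact h2.symm
    · exact absurd h1.symm (pf_ne hE h)

lemma pf_invol {G : SimpleGraph V} {M : Set (Sym2 V)} (hE : M ⊆ G.edgeSet) {v : V}
    (h : ∃! e, e ∈ M ∧ v ∈ e) (h2 : ∃! e, e ∈ M ∧ pf M v ∈ e) : pf M (pf M v) = v := by
  rw [pf_eq_iff hE h2]
  rw [Sym2.eq_swap]
  exact pf_edge h

lemma even_card_of_pairing {V : Type*} [DecidableEq V] (p : V → V) :
    ∀ (n : ℕ) (B : Finset V), B.card = n →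
      (∀ v ∈ B, p v ∈ B) → (∀ v ∈ B, p (p v) = v) → (∀ v ∈ B, p v ≠ v) →
      Even n := by
  intro n
  induction n using Nat.strong_induction_on with
  | _ n ih =>
    intro B hcard h1 h2 h3
    rcases B.eq_empty_or_nonempty with rfl | ⟨v, hv⟩
    · rw [Finset.card_empty] at hcard; exact hcard ▸ Even.zero
    · have hpv := h1 v hv
      have hsub : {v, p v} ⊆ B := by
        intro x hx; simp only [Finset.mem_insert, Finset.mem_singleton] at hx
        rcases hx with rfl | rfl
        exacts [hv, hpv]
      have hc2 : ({v, p v} : Finset V).card = 2 := by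
        rw [Finset.card_insert_of_notMem (by simp [Ne, (h3 v hv).symm, eq_comm])]
        · simp
      have hcd : (B \ {v, p v}).card = n - 2 := by
        rw [Finset.card_sdiff_of_subset hsub, hc2, hcard]
      have hn2 : 2 ≤ n := by
        rw [← hcard]
        calc 2 = ({v, p v} : Finset V).card := hc2.symm
        _ ≤ B.card := Finset.card_le_card hsub
      have heven : Even (n - 2) := by
        refine ih (n - 2) (by omega) (B \ {v, p v}) hcd ?_ ?_ ?_
        · intro w hw
          rw [Finset.mem_sdiff] at hw ⊢
          refine ⟨h1 w hw.1, ?_⟩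
          simp only [Finset.mem_insert, Finset.mem_singleton] at hw ⊢
          push_neg
          push_neg at hw
          constructor
          · intro hpw
            exact hw.2.2 ((h2 w hw.1).symm.trans (congrArg p hpw))
          · intro hpw
            exact hw.2.1 ((h2 w hw.1).symm.trans ((congrArg p hpw).trans (h2 v hv)))
        · intro w hw; exact h2 w (Finset.mem_sdiff.mp hw).1
        · intro w hw; exact h3 w (Finset.mem_sdiff.mp hw).1
      obtain ⟨m, hm⟩ := heven
      exact ⟨m + 1, by omega⟩

lemma walk_exists_seq {G : SimpleGraph V} {u v : V} (w : G.Walk u v) :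
    ∃ x : ℕ → V, x 0 = u ∧ x w.length = v ∧
      (∀ i < w.length, G.Adj (x i) (x (i + 1))) ∧
      w.support = (List.range (w.length + 1)).map x ∧
      w.edges = (List.range w.length).map (fun i => s(x i, x (i + 1))) := by
  induction w with
  | nil => exact ⟨fun _ => _, rfl, rfl, by simp, by simp, by simp⟩
  | @cons a b d h p ih =>
    obtain ⟨x, hx0, hxl, hadj, hsup, hedg⟩ := ih
    refine ⟨fun i => Nat.casesOn i a x, rfl, (by exact hxl), ?_, ?_, ?_⟩
    · intro i hi
      match i with
      | 0 => simpa [hx0] using h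
      | (j+1) =>
        exact hadj j (by simpa using hi)
    · show a :: p.support = _
      rw [show (Walk.cons h p).length = p.length + 1 from rfl, List.range_succ_eq_map,
        List.map_cons, List.map_map]
      congr 1
    · show s(a, b) :: p.edges = _
      rw [show (Walk.cons h p).length = p.length + 1 from rfl, List.range_succ_eq_map,
        List.map_cons, List.map_map]
      congr 1
      show s(a, b) = s(a, x 0)
      rw [hx0]

noncomputable def mkw (G : SimpleGraph V) (x : ℕ → V) (h : ∀ n, G.Adj (x n) (x (n + 1))) :
    (m n : ℕ) → G.Walk (x n) (x (n + m))
  | 0, n => Walk.nil.copy rfl (congrArg x (by omega))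
  | m + 1, n => (Walk.cons (h n) (mkw G x h m (n + 1))).copy rfl (congrArg x (by omega))

lemma mkw_support (G : SimpleGraph V) (x : ℕ → V) (h : ∀ n, G.Adj (x n) (x (n + 1)))
    (m n : ℕ) : (mkw G x h m n).support = (List.range (m + 1)).map (fun i => x (n + i)) := by
  induction m generalizing n with
  | zero => rw [mkw, Walk.support_copy, Walk.support_nil, show List.range 1 = [0] by rfl]; rfl
  | succ m ih =>
    conv_rhs => rw [List.range_succ_eq_map, List.map_cons, List.map_map]
    rw [mkw, Walk.support_copy, Walk.support_cons, ih (n + 1)]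
    congr 1
    apply List.map_congr_left
    intro i _
    show x (n + 1 + i) = x (n + (i + 1))
    congr 1
    omega

lemma mkw_edges (G : SimpleGraph V) (x : ℕ → V) (h : ∀ n, G.Adj (x n) (x (n + 1)))
    (m n : ℕ) : (mkw G x h m n).edges
      = (List.range m).map (fun i => s(x (n + i), x (n + i + 1))) := by
  induction m generalizing n with
  | zero => rw [mkw, Walk.edges_copy, Walk.edges_nil, List.range_zero]; rfl
  | succ m ih =>
    conv_rhs => rw [List.range_succ_eq_map, List.map_cons, List.map_map]
    rw [mkw, Walk.edges_copy, Walk.edges_cons, ih (n + 1)]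
    congr 1
    apply List.map_congr_left
    intro i _
    show s(x (n + 1 + i), x (n + 1 + i + 1)) = s(x (n + (i + 1)), x (n + (i + 1) + 1))
    have : n + 1 + i = n + (i + 1) := by omega
    rw [this]

lemma mkw_length (G : SimpleGraph V) (x : ℕ → V) (h : ∀ n, G.Adj (x n) (x (n + 1)))
    (m n : ℕ) : (mkw G x h m n).length = m := by
  have := congrArg List.length (mkw_edges G x h m n)
  simpa [Walk.length_edges] using this

lemma fwd_aux [Fintype V] {G : SimpleGraph V} (hG : HasPM G) {S : Set (Sym2 V)}
    (hGFS : IsGFS G S) {v : V} (c : G.Walk v v) (hc : IsNiceCycle G c) :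
    ∃ e ∈ S, e ∈ c.edges := by
  classical
  by_contra hcon
  push_neg at hcon
  obtain ⟨hcyc, M₀, hM₀E, hM₀A, hM₀u⟩ := hc
  obtain ⟨x, hx0, hxn, hadj, hsup, hedg⟩ := walk_exists_seq c
  set n := c.length with hn
  have hn3 : 3 ≤ n := hcyc.three_le_length
  have htail : c.support.tail = (List.range n).map (fun i => x (i + 1)) := by
    rw [hsup, List.range_succ_eq_map, List.map_cons, List.map_map, List.tail_cons]
    rfl
  have hnodup : ((List.range n).map (fun i => x (i + 1))).Nodup := by
    rw [← htail]; exact hcyc.support_nodup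
  have hinj1 : ∀ i j, i < n → j < n → x (i + 1) = x (j + 1) → i = j := fun i j hi hj hxij =>
    List.inj_on_of_nodup_map hnodup (List.mem_range.mpr hi) (List.mem_range.mpr hj) hxij
  have hinj : ∀ i j, i < n → j < n → x i = x j → i = j := by
    intro i j hi hj hxe
    match i, j with
    | 0, 0 => rfl
    | 0, (j+1) =>
      exfalso
      have h1 : x (j + 1) = x ((n - 1) + 1) := by
        have he : (n - 1) + 1 = n := by omega
        rw [he, hxn, ← hx0, hxe]
      have := hinj1 j (n - 1) (by omega) (by omega) h1
      omega
    | (i+1), 0 =>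
      exfalso
      have h1 : x (i + 1) = x ((n - 1) + 1) := by
        have he : (n - 1) + 1 = n := by omega
        rw [he, hxn, ← hx0, ← hxe]
      have := hinj1 i (n - 1) (by omega) (by omega) h1
      omega
    | (i+1), (j+1) =>
      have := hinj1 i j (by omega) (by omega) hxe
      omega
  have hA : ∀ i, i ≤ n → x i ∈ c.support := fun i hi =>
    hsup ▸ List.mem_map.mpr ⟨i, List.mem_range.mpr (by omega), rfl⟩
  have hA' : ∀ w ∈ c.support, ∃ j, j < n ∧ x j = w := by
    intro w hw
    rw [hsup] at hw
    obtain ⟨i, hi, rfl⟩ := List.mem_map.mp hw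
    rw [List.mem_range] at hi
    rcases Nat.lt_or_ge i n with hi' | hi'
    · exact ⟨i, hi', rfl⟩
    · have : i = n := by omega
      subst this
      exact ⟨0, by omega, hx0.trans hxn.symm⟩
  -- parity
  have hVeven : Even (Fintype.card V) := by
    obtain ⟨Mg, hMgE, hMgu⟩ := hG
    rw [← Finset.card_univ]
    refine even_card_of_pairing (pf Mg) _ Finset.univ rfl (fun w _ => Finset.mem_univ _)
      (fun w _ => pf_invol hMgE (hMgu w) (hMgu _)) (fun w _ => pf_ne hMgE (hMgu w))
  have hBeven : Even (Finset.univ.filter (fun w => w ∉ c.support)).card := by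
    refine even_card_of_pairing (pf M₀) _ _ rfl ?_ ?_ ?_
    · intro w hw
      rw [Finset.mem_filter] at hw ⊢
      refine ⟨Finset.mem_univ _, ?_⟩
      exact hM₀A _ (pf_edge (hM₀u w hw.2)) _ (Sym2.mem_mk_right _ _)
    · intro w hw
      rw [Finset.mem_filter] at hw
      refine pf_invol hM₀E (hM₀u w hw.2) (hM₀u _ ?_)
      exact hM₀A _ (pf_edge (hM₀u w hw.2)) _ (Sym2.mem_mk_right _ _)
    · intro w hw
      rw [Finset.mem_filter] at hw
      exact pf_ne hM₀E (hM₀u w hw.2)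
  have hmem_tail : ∀ w, w ∈ c.support ↔ w ∈ c.support.tail := by
    intro w
    constructor
    · intro hw
      rw [c.support_eq_cons] at hw
      rcases List.mem_cons.mp hw with rfl | hw
      · rw [htail]
        refine List.mem_map.mpr ⟨n - 1, List.mem_range.mpr (by omega), ?_⟩
        have he : (n - 1) + 1 = n := by omega
        rw [he, hxn]
      · exact hw
    · intro hw
      rw [c.support_eq_cons]
      exact List.mem_cons.mpr (Or.inr hw)
  have hTcard : c.support.tail.toFinset.card = n := by
    rw [List.toFinset_card_of_nodup hcyc.support_nodup]
    have := c.length_support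
    rw [List.length_tail, this]
    show c.length + 1 - 1 = c.length
    omega
  have hneven : Even n := by
    have hsplit := Finset.card_filter_add_card_filter_not
      (s := (Finset.univ : Finset V)) (p := (fun w => w ∈ c.support))
    have hTeq : Finset.univ.filter (fun w => w ∈ c.support) = c.support.tail.toFinset := by
      ext w
      simp only [Finset.mem_filter, Finset.mem_univ, true_and, List.mem_toFinset]
      try exact hmem_tail w
    rw [hTeq, hTcard, Finset.card_univ] at hsplit
    rcases hVeven with ⟨m, hm⟩
    rcases hBeven with ⟨l, hl⟩
    have : (Finset.filter (fun w => ¬w ∈ c.support) Finset.univ).card = l + l := by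
      rw [← hl]
    rw [this] at hsplit
    exact ⟨m - l, by omega⟩
  -- the two matchings
  set E₁ : Set (Sym2 V) := {e | ∃ i, i < n ∧ Even i ∧ e = s(x i, x (i + 1))} with hE₁
  set E₂ : Set (Sym2 V) := {e | ∃ i, i < n ∧ ¬Even i ∧ e = s(x i, x (i + 1))} with hE₂
  have hcycE : ∀ i, i < n → s(x i, x (i + 1)) ∈ c.edges := fun i hi =>
    hedg ▸ List.mem_map.mpr ⟨i, List.mem_range.mpr hi, rfl⟩
  have hPM1 : IsPM G (M₀ ∪ E₁) := by
    constructor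
    · rintro e (he | ⟨i, hi, -, rfl⟩)
      · exact hM₀E he
      · exact (hadj i hi)
    · intro w
      by_cases hw : w ∈ c.support
      · obtain ⟨j, hj, rfl⟩ := hA' w hw
        by_cases hje : Even j
        · refine ⟨s(x j, x (j + 1)), ⟨Or.inr ⟨j, hj, hje, rfl⟩, Sym2.mem_mk_left _ _⟩, ?_⟩
          rintro e' ⟨(he' | ⟨i, hi, hie, rfl⟩), hwe'⟩
          · exact absurd hw (hM₀A e' he' _ hwe')
          · rcases Sym2.mem_iff.mp hwe' with hji | hji
            · rw [hinj j i hj hi hji]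
            · by_cases hi1 : i + 1 < n
              · exfalso
                have hji' : j = i + 1 := hinj j (i + 1) hj hi1 hji
                rw [hji', Nat.even_add_one] at hje
                exact hje hie
              · exfalso
                have hin : i + 1 = n := by omega
                have : Even (i + 1) := hin ▸ hneven
                rw [Nat.even_add_one] at this
                exact this hie
        · have hj1 : j ≠ 0 := by rintro rfl; exact hje Even.zero
          have hjm : (j - 1) + 1 = j := by omega
          have hjev : Even (j - 1) := by
            rcases Nat.even_or_odd j with h | h
            · exact absurd h hje
            · obtain ⟨t, ht⟩ := h
              exact ⟨t, by omega⟩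
          refine ⟨s(x (j - 1), x ((j - 1) + 1)), ⟨Or.inr ⟨j - 1, by omega, hjev, rfl⟩, ?_⟩, ?_⟩
          · rw [hjm]; exact Sym2.mem_mk_right _ _
          · rintro e' ⟨(he' | ⟨i, hi, hie, rfl⟩), hwe'⟩
            · exact absurd hw (hM₀A e' he' _ hwe')
            · rcases Sym2.mem_iff.mp hwe' with hji | hji
              · exfalso
                have := hinj j i hj hi hji
                subst this
                exact hje hie
              · by_cases hi1 : i + 1 < n
                · have hji' : j = i + 1 := hinj j (i + 1) hj hi1 hji
                  have : i = j - 1 := by omega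
                  rw [this]
                · exfalso
                  have hin : i + 1 = n := by omega
                  have hj0 : j = 0 := hinj j 0 hj (by omega) (by rw [hji, hin, hxn, ← hx0])
                  exact hj1 hj0
      · obtain ⟨e, ⟨heM, hwe⟩, huniq⟩ := hM₀u w hw
        refine ⟨e, ⟨Or.inl heM, hwe⟩, ?_⟩
        rintro e' ⟨(he' | ⟨i, hi, -, rfl⟩), hwe'⟩
        · exact huniq e' ⟨he', hwe'⟩
        · exfalso
          rcases Sym2.mem_iff.mp hwe' with rfl | rfl
          · exact hw (hA i (by omega))
          · exact hw (hA (i + 1) (by omega))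
  have hPM2 : IsPM G (M₀ ∪ E₂) := by
    constructor
    · rintro e (he | ⟨i, hi, -, rfl⟩)
      · exact hM₀E he
      · exact (hadj i hi)
    · intro w
      by_cases hw : w ∈ c.support
      · obtain ⟨j, hj, rfl⟩ := hA' w hw
        by_cases hje : Even j
        · by_cases hj0 : j = 0
          · subst hj0
            have hodd : ¬ Even (n - 1) := by
              intro h
              obtain ⟨a, ha⟩ := h
              obtain ⟨b, hb⟩ := hneven
              omega
            have hn1 : (n - 1) + 1 = n := by omega
            refine ⟨s(x (n - 1), x ((n - 1) + 1)), ⟨Or.inr ⟨n - 1, by omega, hodd, rfl⟩, ?_⟩, ?_⟩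
            · rw [hn1]
              have hx0n : x 0 = x n := hx0.trans hxn.symm
              rw [hx0n]
              exact Sym2.mem_mk_right _ _
            · rintro e' ⟨(he' | ⟨i, hi, hio, rfl⟩), hwe'⟩
              · exact absurd hw (hM₀A e' he' _ hwe')
              · rcases Sym2.mem_iff.mp hwe' with hji | hji
                · exfalso
                  have := hinj 0 i hj hi hji
                  exact hio (this ▸ Even.zero)
                · by_cases hi1 : i + 1 < n
                  · exfalso
                    have := hinj 0 (i + 1) hj hi1 hji
                    omega
                  · have : i = n - 1 := by omega
                    rw [this]
          · have hjm : (j - 1) + 1 = j := by omega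
            have hjodd : ¬ Even (j - 1) := by
              intro h
              obtain ⟨a, ha⟩ := h
              obtain ⟨b, hb⟩ := hje
              omega
            refine ⟨s(x (j - 1), x ((j - 1) + 1)), ⟨Or.inr ⟨j - 1, by omega, hjodd, rfl⟩, ?_⟩, ?_⟩
            · rw [hjm]; exact Sym2.mem_mk_right _ _
            · rintro e' ⟨(he' | ⟨i, hi, hio, rfl⟩), hwe'⟩
              · exact absurd hw (hM₀A e' he' _ hwe')
              · rcases Sym2.mem_iff.mp hwe' with hji | hji
                · exfalso
                  have := hinj j i hj hi hji
                  subst this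
                  exact hio hje
                · by_cases hi1 : i + 1 < n
                  · have hji' : j = i + 1 := hinj j (i + 1) hj hi1 hji
                    have : i = j - 1 := by omega
                    rw [this]
                  · exfalso
                    have hin : i + 1 = n := by omega
                    have hj0' : j = 0 := hinj j 0 hj (by omega) (by rw [hji, hin, hxn, ← hx0])
                    exact hj0 hj0'
        · refine ⟨s(x j, x (j + 1)), ⟨Or.inr ⟨j, hj, hje, rfl⟩, Sym2.mem_mk_left _ _⟩, ?_⟩
          rintro e' ⟨(he' | ⟨i, hi, hio, rfl⟩), hwe'⟩
          · exact absurd hw (hM₀A e' he' _ hwe')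
          · rcases Sym2.mem_iff.mp hwe' with hji | hji
            · rw [hinj j i hj hi hji]
            · by_cases hi1 : i + 1 < n
              · exfalso
                have hji' : j = i + 1 := hinj j (i + 1) hj hi1 hji
                exact hje (hji' ▸ (Nat.even_add_one.mpr hio))
              · exfalso
                have hin : i + 1 = n := by omega
                have hj0 : j = 0 := hinj j 0 hj (by omega) (by rw [hji, hin, hxn, ← hx0])
                exact hje (hj0 ▸ Even.zero)
      · obtain ⟨e, ⟨heM, hwe⟩, huniq⟩ := hM₀u w hw
        refine ⟨e, ⟨Or.inl heM, hwe⟩, ?_⟩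
        rintro e' ⟨(he' | ⟨i, hi, -, rfl⟩), hwe'⟩
        · exact huniq e' ⟨he', hwe'⟩
        · exfalso
          rcases Sym2.mem_iff.mp hwe' with rfl | rfl
          · exact hw (hA i (by omega))
          · exact hw (hA (i + 1) (by omega))
  have he0 : s(x 0, x (0 + 1)) ∈ M₀ ∪ E₁ := Or.inr ⟨0, by omega, Even.zero, rfl⟩
  have he0' : s(x 0, x (0 + 1)) ∉ M₀ ∪ E₂ := by
    rintro (h0 | ⟨i, hi, hio, hieq⟩)
    · exact (hM₀A _ h0 (x 0) (Sym2.mem_mk_left _ _)) (hA 0 (by omega))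
    · rw [Sym2.eq_iff] at hieq
      rcases hieq with ⟨h01, h02⟩ | ⟨h01, h02⟩
      · have := hinj 0 i (by omega) hi h01
        exact hio (this ▸ Even.zero)
      · by_cases hi1 : i + 1 < n
        · have := hinj 0 (i + 1) (by omega) hi1 h01
          omega
        · have hin : i + 1 = n := by omega
          have := hinj (0 + 1) i (by omega) hi h02
          omega
  have hint : (M₀ ∪ E₁) ∩ S = (M₀ ∪ E₂) ∩ S := by
    ext e
    constructor
    · rintro ⟨(he | ⟨i, hi, -, rfl⟩), heS⟩
      · exact ⟨Or.inl he, heS⟩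
      · exact absurd (hcycE i hi) (hcon _ heS)
    · rintro ⟨(he | ⟨i, hi, -, rfl⟩), heS⟩
      · exact ⟨Or.inl he, heS⟩
      · exact absurd (hcycE i hi) (hcon _ heS)
  exact he0' ((hGFS.2 _ _ hPM1 hPM2 hint) ▸ he0)

lemma bwd_aux [Fintype V] {G : SimpleGraph V} {S : Set (Sym2 V)} (hS : S ⊆ G.edgeSet)
    (hnice : ∀ (v : V) (c : G.Walk v v), IsNiceCycle G c → ∃ e ∈ S, e ∈ c.edges) :
    IsGFS G S := by
  classical
  refine ⟨hS, fun M M' hM hM' hMS => ?_⟩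
  by_contra hMne
  have hdiff : ∃ e, e ∈ M ∧ e ∉ M' := by
    by_contra hd
    push_neg at hd
    apply hMne
    apply Set.eq_of_subset_of_subset hd
    intro e' he'
    have hmem : ∃ a, a ∈ e' := by
      induction e' using Sym2.ind with
      | _ a b => exact ⟨a, Sym2.mem_mk_left a b⟩
    obtain ⟨a, ha⟩ := hmem
    obtain ⟨ea, ⟨heaM, haea⟩, -⟩ := hM.2 a
    have := (hM'.2 a).unique ⟨hd ea heaM, haea⟩ ⟨he', ha⟩
    rw [← this]
    exact heaM
  obtain ⟨e₀, he₀M, he₀M'⟩ := hdiff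
  have hmem : ∃ a, a ∈ e₀ := by
    induction e₀ using Sym2.ind with
    | _ a b => exact ⟨a, Sym2.mem_mk_left a b⟩
  obtain ⟨a, ha⟩ := hmem
  set f := pf M with hfdef
  set g := pf M' with hgdef
  have hfM : ∀ w, s(w, f w) ∈ M := fun w => pf_edge (hM.2 w)
  have hgM : ∀ w, s(w, g w) ∈ M' := fun w => pf_edge (hM'.2 w)
  have hfu : ∀ w e, e ∈ M → w ∈ e → e = s(w, f w) := fun w e he hwe => pf_uniq (hM.2 w) he hwe
  have hgu : ∀ w e, e ∈ M' → w ∈ e → e = s(w, g w) := fun w e he hwe => pf_uniq (hM'.2 w) he hwe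
  have hff : ∀ w, f (f w) = w := fun w => pf_invol hM.1 (hM.2 w) (hM.2 _)
  have hgg : ∀ w, g (g w) = w := fun w => pf_invol hM'.1 (hM'.2 w) (hM'.2 _)
  set x : ℕ → V := fun i => Nat.rec a (fun n xn => if n % 2 = 0 then f xn else g xn) i with hxdef
  have hx0 : x 0 = a := rfl
  have hxs : ∀ i, x (i + 1) = if i % 2 = 0 then f (x i) else g (x i) := fun i => rfl
  -- alternation
  have halt : ∀ i, (i % 2 = 0 → s(x i, x (i + 1)) ∈ M ∧ s(x i, x (i + 1)) ∉ M') ∧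
      (i % 2 = 1 → s(x i, x (i + 1)) ∈ M' ∧ s(x i, x (i + 1)) ∉ M) := by
    intro i
    induction i with
    | zero =>
      refine ⟨fun _ => ?_, fun h => by omega⟩
      rw [hxs 0, if_pos rfl, hx0]
      refine ⟨hfM a, ?_⟩
      rw [← hfu a e₀ he₀M ha]
      exact he₀M'
    | succ i ih =>
      by_cases hie : i % 2 = 0
      · refine ⟨fun h => by omega, fun _ => ?_⟩
        have hprev := ih.1 hie
        have hmem : s(x (i + 1), x (i + 2)) ∈ M' := by
          rw [hxs (i + 1), if_neg (by omega)]
          exact hgM _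
        refine ⟨hmem, ?_⟩
        intro hin
        apply hprev.2
        have h1 : s(x (i + 1), x (i + 2)) = s(x (i + 1), f (x (i + 1))) :=
          hfu _ _ hin (Sym2.mem_mk_left _ _)
        have h2 : f (x (i + 1)) = x i := by rw [hxs i, if_pos hie, hff]
        have h3 : s(x (i + 1), x (i + 2)) = s(x i, x (i + 1)) := by
          rw [h1, h2, Sym2.eq_swap]
        rw [← h3]
        exact hmem
      · refine ⟨fun _ => ?_, fun h => by omega⟩
        have hprev := ih.2 (by omega)
        have hmem : s(x (i + 1), x (i + 2)) ∈ M := by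
          rw [hxs (i + 1), if_pos (by omega)]
          exact hfM _
        refine ⟨hmem, ?_⟩
        intro hin
        apply hprev.2
        have h1 : s(x (i + 1), x (i + 2)) = s(x (i + 1), g (x (i + 1))) :=
          hgu _ _ hin (Sym2.mem_mk_left _ _)
        have h2 : g (x (i + 1)) = x i := by rw [hxs i, if_neg hie, hgg]
        have h3 : s(x (i + 1), x (i + 2)) = s(x i, x (i + 1)) := by
          rw [h1, h2, Sym2.eq_swap]
        rw [← h3]
        exact hmem
  have hedgeM : ∀ i, s(x i, x (i + 1)) ∈ G.edgeSet := by
    intro i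
    by_cases hie : i % 2 = 0
    · exact hM.1 ((halt i).1 hie).1
    · exact hM'.1 ((halt i).2 (by omega)).1
  have hadj : ∀ i, G.Adj (x i) (x (i + 1)) := fun i => (hedgeM i)
  have hxne : ∀ i, x (i + 1) ≠ x i := fun i => (hadj i).ne'
  -- backward determinism
  have hback : ∀ m l, m % 2 = l % 2 → x (m + 1) = x (l + 1) → x m = x l := by
    intro m l hp he
    by_cases hm : m % 2 = 0
    · have h1 : f (x (m + 1)) = x m := by rw [hxs m, if_pos hm, hff]
      have h2 : f (x (l + 1)) = x l := by rw [hxs l, if_pos (by omega), hff]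
      rw [← h1, ← h2, he]
    · have h1 : g (x (m + 1)) = x m := by rw [hxs m, if_neg hm, hgg]
      have h2 : g (x (l + 1)) = x l := by rw [hxs l, if_neg (by omega), hgg]
      rw [← h1, ← h2, he]
  have hshift : ∀ d m l, m % 2 = l % 2 → x (m + d) = x (l + d) → x m = x l := by
    intro d
    induction d with
    | zero => intro m l _ h; exact h
    | succ d ih =>
      intro m l hp he
      refine ih m l hp (hback (m + d) (l + d) (by omega) ?_)
      have e1 : m + d + 1 = m + (d + 1) := by omega
      have e2 : l + d + 1 = l + (d + 1) := by omega
      rw [e1, e2]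
      exact he
  -- pigeonhole: the sequence returns to x 0
  have hex : ∃ p, 0 < p ∧ p % 2 = 0 ∧ x p = x 0 := by
    obtain ⟨m, l, hml, hst⟩ :=
      Finite.exists_ne_map_eq_of_infinite (fun i : ℕ => (x i, decide (i % 2 = 0)))
    have hx1 : x m = x l := congrArg Prod.fst hst
    have hx2 : (m % 2 = 0) ↔ (l % 2 = 0) := decide_eq_decide.mp (congrArg Prod.snd hst)
    have hp2 : m % 2 = l % 2 := by omega
    rcases Nat.lt_or_ge m l with h | h
    · refine ⟨l - m, by omega, by omega, ?_⟩
      have := hshift m 0 (l - m) (by omega) ?_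
      · exact this.symm
      · have e1 : (0 : ℕ) + m = m := by omega
        have e2 : l - m + m = l := by omega
        rw [e1, e2]
        exact hx1
    · have hlm : l < m := by omega
      refine ⟨m - l, by omega, by omega, ?_⟩
      have := hshift l 0 (m - l) (by omega) ?_
      · exact this.symm
      · have e1 : (0 : ℕ) + l = l := by omega
        have e2 : m - l + l = m := by omega
        rw [e1, e2]
        exact hx1.symm
  set k := Nat.find hex with hkdef
  obtain ⟨hkpos, hkeven, hxk⟩ := Nat.find_spec hex
  have hkmin : ∀ q, q < k → ¬(0 < q ∧ q % 2 = 0 ∧ x q = x 0) := fun q hq => Nat.find_min hex hq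
  have hk2 : k ≠ 2 := by
    intro h2
    have hx20 : x 2 = x 0 := by rw [← h2]; exact hxk
    have he1 : s(x 1, x 2) ∈ M' := ((halt 1).2 rfl).1
    have he0 : s(x 0, x 1) ∉ M' := ((halt 0).1 rfl).2
    apply he0
    have : s(x 1, x 2) = s(x 0, x 1) := by rw [hx20, Sym2.eq_swap]
    rw [← this]
    exact he1
  have hk4 : 4 ≤ k := by
    rcases Nat.lt_or_ge k 4 with h | h
    · interval_cases k <;> omega
    · exact h
  -- injectivity
  have hsame : ∀ i j, i < j → j ≤ k → ¬(i = 0 ∧ j = k) → i % 2 = j % 2 → x i ≠ x j := by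
    intro i j hij hjk hnot hp hxe
    have hshifted : x 0 = x (j - i) := by
      refine hshift i 0 (j - i) (by omega) ?_
      have e1 : (0 : ℕ) + i = i := by omega
      have e2 : j - i + i = j := by omega
      rw [e1, e2]
      exact hxe
    have hji : j - i < k ∨ j - i = k := by omega
    rcases hji with h | h
    · exact hkmin (j - i) h ⟨by omega, by omega, hshifted.symm⟩
    · exact hnot ⟨by omega, by omega⟩
  have hopp : ∀ d i j, j - i = d → i < j → j ≤ k → i % 2 ≠ j % 2 → x i ≠ x j := by
    intro d
    induction d using Nat.strong_induction_on with
    | _ d ih =>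
      intro i j hd hij hjk hp hxe
      by_cases hj1 : j = i + 1
      · subst hj1
        exact hxne i hxe.symm
      · have hji2 : i + 2 ≤ j := by omega
        have hji3 : i + 3 ≤ j := by omega
        have hkey : x (i + 1) = x (j - 1) := by
          by_cases hie : i % 2 = 0
          · have h1 : x (i + 1) = f (x i) := by rw [hxs i, if_pos hie]
            have h2 : x ((j - 1) + 1) = f (x (j - 1)) := by rw [hxs (j - 1), if_pos (by omega)]
            have h2' : x j = f (x (j - 1)) := by
              have e1 : (j - 1) + 1 = j := by omega
              rw [e1] at h2
              exact h2
            rw [h1, hxe, h2', hff]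
          · have h1 : x (i + 1) = g (x i) := by rw [hxs i, if_neg hie]
            have h2 : x ((j - 1) + 1) = g (x (j - 1)) := by rw [hxs (j - 1), if_neg (by omega)]
            have h2' : x j = g (x (j - 1)) := by
              have e1 : (j - 1) + 1 = j := by omega
              rw [e1] at h2
              exact h2
            rw [h1, hxe, h2', hgg]
        exact ih (j - 1 - (i + 1)) (by omega) (i + 1) (j - 1) rfl (by omega) (by omega)
          (by omega) hkey
  have hinj : ∀ i j, i < j → j ≤ k → ¬(i = 0 ∧ j = k) → x i ≠ x j := by
    intro i j hij hjk hnot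
    by_cases hp : i % 2 = j % 2
    · exact hsame i j hij hjk hnot hp
    · exact hopp (j - i) i j rfl hij hjk hp
  -- build the cycle
  have hx0k : x (0 + k) = x 0 := by rw [Nat.zero_add]; exact hxk
  set c : G.Walk (x 0) (x 0) := (mkw G x hadj k 0).copy rfl hx0k with hcdef
  have hsupc : c.support = (List.range (k + 1)).map x := by
    rw [hcdef, Walk.support_copy, mkw_support]
    apply List.map_congr_left
    intro i _
    rw [Nat.zero_add]
  have hedgc : c.edges = (List.range k).map (fun i => s(x i, x (i + 1))) := by
    rw [hcdef, Walk.edges_copy, mkw_edges]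
    apply List.map_congr_left
    intro i _
    have e1 : (0 : ℕ) + i = i := by omega
    rw [e1]
  have hlen : c.length = k := by
    rw [hcdef, Walk.length_copy, mkw_length]
  have hcyc : c.IsCycle := by
    refine ⟨⟨⟨?_⟩, ?_⟩, ?_⟩
    · -- edges nodup
      rw [hedgc]
      refine List.Nodup.map_on ?_ (List.nodup_range (n := k))
      intro i hi j hj he
      rw [List.mem_range] at hi hj
      by_contra hne
      rcases Nat.lt_or_ge i j with hij | hij
      · rw [Sym2.eq_iff] at he
        rcases he with ⟨h1, h2⟩ | ⟨h1, h2⟩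
        · exact hinj i j hij (by omega) (by omega) h1
        · rcases Nat.lt_or_ge (i + 1) j with h3 | h3
          · exact hinj (i + 1) j h3 (by omega) (by omega) h2
          · have : j = i + 1 := by omega
            subst this
            exact hinj i (i + 2) (by omega) (by omega) (by omega) h1
      · have hji : j < i := by omega
        rw [Sym2.eq_iff] at he
        rcases he with ⟨h1, h2⟩ | ⟨h1, h2⟩
        · exact hinj j i hji (by omega) (by omega) h1.symm
        · rcases Nat.lt_or_ge (j + 1) i with h3 | h3
          · exact hinj (j + 1) i h3 (by omega) (by omega) h1.symm
          · have : i = j + 1 := by omega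
            subst this
            exact hinj j (j + 2) (by omega) (by omega) (by omega) h2.symm
    · -- ne nil
      intro hnil
      rw [hnil, Walk.length_nil] at hlen
      omega
    · -- support tail nodup
      have htl : c.support.tail = (List.range k).map (fun i => x (i + 1)) := by
        rw [hsupc, List.range_succ_eq_map, List.map_cons, List.tail_cons, List.map_map]
        rfl
      rw [htl]
      refine List.Nodup.map_on ?_ (List.nodup_range (n := k))
      intro i hi j hj he
      rw [List.mem_range] at hi hj
      by_contra hne
      rcases Nat.lt_or_ge i j with hij | hij
      · exact hinj (i + 1) (j + 1) (by omega) (by omega) (by omega) he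
      · exact hinj (j + 1) (i + 1) (by omega) (by omega) (by omega) he.symm
  -- support membership
  have hsupm : ∀ w, w ∈ c.support ↔ ∃ i, i < k ∧ x i = w := by
    intro w
    rw [hsupc]
    constructor
    · intro hw
      obtain ⟨i, hi, rfl⟩ := List.mem_map.mp hw
      rw [List.mem_range] at hi
      rcases Nat.lt_or_ge i k with h | h
      · exact ⟨i, h, rfl⟩
      · have : i = k := by omega
        subst this
        exact ⟨0, by omega, hxk.symm⟩
    · rintro ⟨i, hi, rfl⟩
      exact List.mem_map.mpr ⟨i, List.mem_range.mpr (by omega), rfl⟩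
  -- the M-partner of a cycle vertex is on the cycle
  have hfcyc : ∀ i, i < k → ∃ j, j < k ∧ x j = f (x i) := by
    intro i hi
    by_cases hie : i % 2 = 0
    · have hmem : s(x i, x (i + 1)) ∈ M := ((halt i).1 hie).1
      have : f (x i) = x (i + 1) := (pf_eq_iff hM.1 (hM.2 (x i))).mpr hmem
      rcases Nat.lt_or_ge (i + 1) k with h | h
      · exact ⟨i + 1, h, this.symm⟩
      · have : f (x i) = x k := by rw [this, show i + 1 = k from by omega]
        exact ⟨0, by omega, by rw [← hxk, this]⟩
    · have hmem : s(x (i - 1), x ((i - 1) + 1)) ∈ M := ((halt (i - 1)).1 (by omega)).1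
      have hmem' : s(x i, x (i - 1)) ∈ M := by
        have e1 : (i - 1) + 1 = i := by omega
        rw [e1] at hmem
        rw [Sym2.eq_swap]
        exact hmem
      have : f (x i) = x (i - 1) := (pf_eq_iff hM.1 (hM.2 (x i))).mpr hmem'
      exact ⟨i - 1, by omega, this.symm⟩
  -- nice cycle
  have hnc : IsNiceCycle G c := by
    refine ⟨hcyc, {e | e ∈ M ∧ ∀ w ∈ e, w ∉ c.support}, ?_, ?_, ?_⟩
    · intro e he
      exact hM.1 he.1
    · intro e he w hw
      exact he.2 w hw
    · intro w hw
      have hfw : f w ∉ c.support := by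
        intro hfw
        obtain ⟨i, hi, hxi⟩ := (hsupm (f w)).mp hfw
        obtain ⟨j, hj, hxj⟩ := hfcyc i hi
        have : w = x j := by
          rw [hxj, hxi, hff]
        exact hw ((hsupm w).mpr ⟨j, hj, this.symm⟩)
      refine ⟨s(w, f w), ⟨⟨hfM w, ?_⟩, Sym2.mem_mk_left _ _⟩, ?_⟩
      · intro u hu
        rcases Sym2.mem_iff.mp hu with rfl | rfl
        · exact hw
        · exact hfw
      · rintro e' ⟨⟨he'M, -⟩, hwe'⟩
        exact hfu w e' he'M hwe'
  obtain ⟨e, heS, hec⟩ := hnice (x 0) c hnc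
  rw [hedgc] at hec
  obtain ⟨i, hi, rfl⟩ := List.mem_map.mp hec
  rw [List.mem_range] at hi
  by_cases hie : i % 2 = 0
  · have h1 := (halt i).1 hie
    have : s(x i, x (i + 1)) ∈ M' ∩ S := by
      rw [← hMS]
      exact ⟨h1.1, heS⟩
    exact h1.2 this.1
  · have h1 := (halt i).2 (by omega)
    have : s(x i, x (i + 1)) ∈ M ∩ S := by
      rw [hMS]
      exact ⟨h1.1, heS⟩
    exact h1.2 this.1

theorem stmt2 [Fintype V] (G : SimpleGraph V) (hG : HasPM G) (S : Set (Sym2 V))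
    (hS : S ⊆ G.edgeSet) :
    IsGFS G S ↔
      ∀ (v : V) (c : G.Walk v v), IsNiceCycle G c → ∃ e ∈ S, e ∈ c.edges := by
  constructor
  · intro hGFS v c hc
    exact fwd_aux hG hGFS c hc
  · intro h
    exact bwd_aux hS h
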